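/- Let A = {a_0,…,a_{n+1}} ⊆ ℝ^n be a circuit (codimension 1, all coefficients of its unique affine relation nonzero) with affine relation ∑_a λ_a·a = 0, ∑_a λ_a = 0. Let h = (h_a) be real heights with ∑_a h_a λ_a ≠ 0, and let c ∈ (ℝ*)^A be sign compatible with A (all c_a λ_a of the same sign). Then the hypersurface ∑_a c_a t^{h_a} x^a = 0 has a singular point in (ℝ_{>0})^n for exactly one value t > 0 of the parameter, namely t_A = (∏_a (λ_a/c_a)^{λ_a})^{1/∑_a h_a λ_a}, and for t = t_A the positive singular point is unique. -/

import Mathlib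

open BigOperators

namespace CircuitAux

variable {n : ℕ}

lemma vspan_top (a : Fin (n + 2) → Fin n → ℝ)
    (hspan : affineSpan ℝ (Set.range a) = ⊤) :
    Submodule.span ℝ (Set.range a -ᵥ Set.range a) = ⊤ := by
  have h1 : vectorSpan ℝ (Set.range a) = ⊤ := by
    rw [← direction_affineSpan, hspan]
    exact AffineSubspace.direction_top ℝ _ _
  rwa [vectorSpan_def] at h1

lemma B_inj (a : Fin (n + 2) → Fin n → ℝ)
    (hspan : affineSpan ℝ (Set.range a) = ⊤) (u0 : ℝ) (u : Fin n → ℝ)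
    (hu : ∀ i, u0 + ∑ j, a i j * u j = 0) : u0 = 0 ∧ u = 0 := by
  have key : ∀ v : Fin n → ℝ, v ∈ Submodule.span ℝ (Set.range a -ᵥ Set.range a) →
      ∑ j, v j * u j = 0 := by
    intro v hv
    induction hv using Submodule.span_induction with
    | mem w hw =>
      obtain ⟨p, hp, q, hq, rfl⟩ := hw
      obtain ⟨i, rfl⟩ := hp
      obtain ⟨k, rfl⟩ := hq
      have hi := hu i
      have hk := hu k
      have habk : ∀ j, (a i -ᵥ a k) j = a i j - a k j := fun j => rfl
      simp only [habk, sub_mul, Finset.sum_sub_distrib]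
      linarith
    | zero => simp
    | add w₁ w₂ _ _ h1 h2 => simp [add_mul, Finset.sum_add_distrib, h1, h2]
    | smul r w _ hw =>
      simp only [Pi.smul_apply, smul_eq_mul, mul_assoc, ← Finset.mul_sum, hw, mul_zero]
  have hu0 : ∀ j, u j = 0 := by
    have h2 := key u (by rw [vspan_top a hspan]; exact Submodule.mem_top)
    intro j
    have h3 := Finset.sum_eq_zero_iff_of_nonneg
      (fun i _ => mul_self_nonneg (u i)) |>.mp h2 j (Finset.mem_univ j)
    exact mul_self_eq_zero.mp h3
  constructor
  · have h4 := hu 0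
    simp [hu0] at h4
    exact h4
  · funext j; exact hu0 j

lemma exists_w (a : Fin (n + 2) → Fin n → ℝ)
    (hspan : affineSpan ℝ (Set.range a) = ⊤) (v : Fin n → ℝ) :
    ∃ w : Fin (n + 2) → ℝ, (∑ i, w i = 0) ∧ ∀ r, ∑ i, w i * a i r = v r := by
  have hv : v ∈ Submodule.span ℝ (Set.range a -ᵥ Set.range a) := by
    rw [vspan_top a hspan]; exact Submodule.mem_top
  induction hv using Submodule.span_induction with
  | mem w hw =>
    obtain ⟨p, hp, q, hq, rfl⟩ := hw
    obtain ⟨i, rfl⟩ := hp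
    obtain ⟨k, rfl⟩ := hq
    refine ⟨(fun m => if m = i then 1 else 0) - (fun m => if m = k then 1 else 0), ?_, ?_⟩
    · simp [Finset.sum_sub_distrib]
    · intro r
      have habk : (a i -ᵥ a k) r = a i r - a k r := rfl
      simp [habk, sub_mul, Finset.sum_sub_distrib, Finset.sum_ite_eq', ite_mul]
  | zero => exact ⟨0, by simp, by simp⟩
  | add w₁ w₂ _ _ h1 h2 =>
    obtain ⟨y₁, hy₁0, hy₁⟩ := h1
    obtain ⟨y₂, hy₂0, hy₂⟩ := h2
    refine ⟨y₁ + y₂, ?_, fun r => ?_⟩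
    · simp [Finset.sum_add_distrib, hy₁0, hy₂0]
    · simp [add_mul, Finset.sum_add_distrib, hy₁ r, hy₂ r]
  | smul r w _ hw =>
    obtain ⟨y, hy0, hy⟩ := hw
    refine ⟨r • y, ?_, fun s => ?_⟩
    · simp [← Finset.mul_sum, hy0]
    · simp only [Pi.smul_apply, smul_eq_mul, mul_assoc, ← Finset.mul_sum, hy s]

def Lmap (a : Fin (n + 2) → Fin n → ℝ) : (Fin (n + 2) → ℝ) →ₗ[ℝ] ℝ × (Fin n → ℝ) where
  toFun y := (∑ i, y i, fun r => ∑ i, y i * a i r)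
  map_add' y z := by
    refine Prod.ext ?_ (funext fun r => ?_) <;>
      simp [add_mul, Finset.sum_add_distrib]
  map_smul' r y := by
    refine Prod.ext ?_ (funext fun s => ?_) <;>
      simp [Finset.mul_sum, mul_assoc]

lemma ker_is_span (a : Fin (n + 2) → Fin n → ℝ)
    (hspan : affineSpan ℝ (Set.range a) = ⊤)
    (lam : Fin (n + 2) → ℝ) (hrel0 : ∑ i, lam i = 0)
    (hrelr : ∀ r, ∑ i, lam i * a i r = 0) (hlam0 : lam ≠ 0) :
    ∀ y : Fin (n + 2) → ℝ, (∑ i, y i = 0) → (∀ r, ∑ i, y i * a i r = 0) →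
      ∃ s : ℝ, y = s • lam := by
  have hsurj : Function.Surjective (Lmap a) := by
    rintro ⟨b0, b⟩
    obtain ⟨w, hw0, hw⟩ := exists_w a hspan (b - b0 • a 0)
    refine ⟨w + fun m => if m = 0 then b0 else 0, ?_⟩
    have h1 : ∑ i, (w i + if i = 0 then b0 else 0) = b0 := by
      simp [Finset.sum_add_distrib, hw0]
    have h2 : ∀ r, ∑ i, (w i + if i = 0 then b0 else 0) * a i r = b r := by
      intro r
      have h3 := hw r
      simp only [Pi.sub_apply, Pi.smul_apply, smul_eq_mul] at h3
      simp [add_mul, Finset.sum_add_distrib, h3, ite_mul, Finset.sum_ite_eq']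
    simp only [Lmap, LinearMap.coe_mk, AddHom.coe_mk]
    exact Prod.ext h1 (funext h2)
  have hrank : Module.finrank ℝ (LinearMap.ker (Lmap a)) = 1 := by
    have h1 := LinearMap.finrank_range_add_finrank_ker (Lmap a)
    rw [LinearMap.range_eq_top.mpr hsurj, finrank_top] at h1
    simp only [Module.finrank_prod, Module.finrank_self, Module.finrank_fin_fun] at h1
    omega
  have hspan1 : Submodule.span ℝ {lam} = LinearMap.ker (Lmap a) := by
    apply Submodule.eq_of_le_of_finrank_eq
    · rw [Submodule.span_singleton_le_iff_mem]
      simp only [LinearMap.mem_ker, Lmap, LinearMap.coe_mk, AddHom.coe_mk]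
      exact Prod.ext (by simpa using hrel0) (funext fun r => by simpa using hrelr r)
    · rw [finrank_span_singleton hlam0, hrank]
  intro y hy1 hy2
  have hyk : y ∈ LinearMap.ker (Lmap a) := by
    simp only [LinearMap.mem_ker, Lmap, LinearMap.coe_mk, AddHom.coe_mk]
    exact Prod.ext (by simpa using hy1) (funext fun r => by simpa using hy2 r)
  rw [← hspan1] at hyk
  obtain ⟨s, hs⟩ := Submodule.mem_span_singleton.mp hyk
  exact ⟨s, hs.symm⟩

def Bmap (a : Fin (n + 2) → Fin n → ℝ) : (ℝ × (Fin n → ℝ)) →ₗ[ℝ] (Fin (n + 2) → ℝ) where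
  toFun u := fun i => u.1 + ∑ j, a i j * u.2 j
  map_add' u v := by
    funext i
    simp [mul_add, Finset.sum_add_distrib]
    ring
  map_smul' r u := by
    funext i
    simp only [Prod.smul_fst, Prod.smul_snd, smul_eq_mul, Pi.smul_apply, RingHom.id_apply]
    simp [mul_add, Finset.mul_sum, mul_left_comm]

def Dmap (lam : Fin (n + 2) → ℝ) : (Fin (n + 2) → ℝ) →ₗ[ℝ] ℝ where
  toFun y := ∑ i, y i * lam i
  map_add' y z := by simp [add_mul, Finset.sum_add_distrib]
  map_smul' r y := by simp [Finset.mul_sum, mul_assoc]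

lemma solve_v (a : Fin (n + 2) → Fin n → ℝ)
    (hspan : affineSpan ℝ (Set.range a) = ⊤)
    (lam : Fin (n + 2) → ℝ) (hrel0 : ∑ i, lam i = 0)
    (hrelr : ∀ r, ∑ i, lam i * a i r = 0) (hlam0 : lam 0 ≠ 0)
    (v : Fin (n + 2) → ℝ) (hv : ∑ i, v i * lam i = 0) :
    ∃ (u0 : ℝ) (u : Fin n → ℝ), ∀ i, u0 + ∑ j, a i j * u j = v i := by
  have hDsurj : Function.Surjective (Dmap lam) := by
    intro r
    refine ⟨fun m => if m = 0 then r / lam 0 else 0, ?_⟩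
    simp [Dmap, ite_mul, Finset.sum_ite_eq', div_mul_cancel₀, hlam0]
  have hBinj : Function.Injective (Bmap a) := by
    rw [injective_iff_map_eq_zero]
    rintro ⟨u0, u⟩ hu
    have h1 : ∀ i, u0 + ∑ j, a i j * u j = 0 := fun i => congrFun hu i
    obtain ⟨h2, h3⟩ := B_inj a hspan u0 u h1
    simp [h2, h3, Prod.ext_iff]
  have hle : LinearMap.range (Bmap a) ≤ LinearMap.ker (Dmap lam) := by
    rintro _ ⟨⟨u0, u⟩, rfl⟩
    simp only [LinearMap.mem_ker, Bmap, Dmap, LinearMap.coe_mk, AddHom.coe_mk]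
    have e1 : ∀ i : Fin (n + 2), (u0 + ∑ j, a i j * u j) * lam i
        = u0 * lam i + ∑ j, lam i * a i j * u j := by
      intro i
      rw [add_mul, Finset.sum_mul]
      congr 1
      exact Finset.sum_congr rfl fun j _ => by ring
    calc ∑ i, (u0 + ∑ j, a i j * u j) * lam i
        = ∑ i, (u0 * lam i + ∑ j, lam i * a i j * u j) :=
          Finset.sum_congr rfl fun i _ => e1 i
      _ = u0 * ∑ i, lam i + ∑ j, (∑ i, lam i * a i j) * u j := by
          rw [Finset.sum_add_distrib, Finset.mul_sum, Finset.sum_comm]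
          congr 1
          exact Finset.sum_congr rfl fun j _ => by rw [Finset.sum_mul]
      _ = 0 := by simp [hrel0, hrelr]
  have heq : LinearMap.range (Bmap a) = LinearMap.ker (Dmap lam) := by
    apply Submodule.eq_of_le_of_finrank_eq hle
    rw [LinearMap.finrank_range_of_inj hBinj]
    have h1 := LinearMap.finrank_range_add_finrank_ker (Dmap lam)
    rw [LinearMap.range_eq_top.mpr hDsurj, finrank_top] at h1
    simp only [Module.finrank_prod, Module.finrank_self, Module.finrank_fin_fun] at h1 ⊢
    omega
  have hv' : v ∈ LinearMap.range (Bmap a) := by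
    rw [heq]
    simp only [LinearMap.mem_ker, Dmap, LinearMap.coe_mk, AddHom.coe_mk]
    exact hv
  obtain ⟨⟨u0, u⟩, hu⟩ := hv'
  exact ⟨u0, u, fun i => congrFun hu i⟩

end CircuitAux

/-- For a circuit `A = {a_0,…,a_{n+1}} ⊆ ℝⁿ` with affine relation `λ`, generic heights `h`
(`∑ h_a λ_a ≠ 0`) and sign-compatible coefficients `c`, the Viro hypersurface
`∑ c_a t^{h_a} x^a = 0` has a positive singular point for exactly one `t > 0`, namely
`t_A = (∏ |λ_a/c_a|^{λ_a})^{1/∑ h_a λ_a}`, and for `t = t_A` the positive singular point is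
unique. -/
theorem circuit_unique_critical_parameter (n : ℕ)
    (a : Fin (n + 2) → Fin n → ℝ) (hspan : affineSpan ℝ (Set.range a) = ⊤)
    (lam : Fin (n + 2) → ℝ) (hrel0 : ∑ i, lam i = 0) (hrel : ∑ i, lam i • a i = 0)
    (hlam : ∀ i, lam i ≠ 0)
    (h : Fin (n + 2) → ℝ) (hh : (∑ i, h i * lam i) ≠ 0)
    (c : Fin (n + 2) → ℝ) (hc : ∀ i, c i ≠ 0)
    (hsign : (∀ i, 0 < c i * lam i) ∨ (∀ i, c i * lam i < 0)) :
    let tA : ℝ := (∏ i, |lam i / c i| ^ lam i) ^ (1 / ∑ i, h i * lam i)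
    (∀ t : ℝ, 0 < t →
      ((∃ x : Fin n → ℝ, (∀ j, 0 < x j) ∧
          (∑ i, c i * t ^ h i * ∏ j, x j ^ a i j) = 0 ∧
          ∀ r : Fin n, (∑ i, a i r * (c i * t ^ h i * ∏ j, x j ^ a i j)) = 0)
        ↔ t = tA)) ∧
    ∃! x : Fin n → ℝ, (∀ j, 0 < x j) ∧
        (∑ i, c i * tA ^ h i * ∏ j, x j ^ a i j) = 0 ∧
        ∀ r : Fin n, (∑ i, a i r * (c i * tA ^ h i * ∏ j, x j ^ a i j)) = 0 := by
  intro tA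
  have htA : tA = (∏ i, |lam i / c i| ^ lam i) ^ (1 / ∑ i, h i * lam i) := rfl
  clear_value tA
  set K : ℝ := ∑ i, h i * lam i with hK
  set P : ℝ := ∏ i, |lam i / c i| ^ lam i with hP
  -- basic facts
  have hrelr : ∀ r, ∑ i, lam i * a i r = 0 := by
    intro r
    have h1 := congrFun hrel r
    simpa [Finset.sum_apply] using h1
  have hlam0 : lam ≠ 0 := fun hl => hlam 0 (congrFun hl 0)
  have habs : ∀ i : Fin (n + 2), (0 : ℝ) < |lam i / c i| :=
    fun i => abs_pos.mpr (div_ne_zero (hlam i) (hc i))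
  have hPpos : 0 < P := Finset.prod_pos fun i _ => Real.rpow_pos_of_pos (habs i) _
  have htApos : 0 < tA := htA ▸ Real.rpow_pos_of_pos hPpos _
  have hlogP : Real.log P = ∑ i, lam i * Real.log |lam i / c i| := by
    rw [hP, Real.log_prod (fun i _ => (Real.rpow_pos_of_pos (habs i) _).ne')]
    exact Finset.sum_congr rfl fun i _ => Real.log_rpow (habs i) _
  have hKlog : K * Real.log tA = Real.log P := by
    rw [htA, Real.log_rpow hPpos, one_div, mul_inv_cancel_left₀ hh]
  -- the sign σ
  have hdiv : ∀ i, lam i / c i = c i * lam i / (c i * c i) :=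
    fun i => (mul_div_mul_left (lam i) (c i) (hc i)).symm
  obtain ⟨σ, hσsq, hσof⟩ : ∃ σ : ℝ, σ * σ = 1 ∧ ∀ i, lam i / c i = σ * |lam i / c i| := by
    rcases hsign with hpos | hneg
    · refine ⟨1, by norm_num, fun i => ?_⟩
      have h1 : 0 < lam i / c i := by
        rw [hdiv i]; exact div_pos (hpos i) (mul_self_pos.mpr (hc i))
      rw [abs_of_pos h1, one_mul]
    · refine ⟨-1, by norm_num, fun i => ?_⟩
      have h1 : lam i / c i < 0 := by
        rw [hdiv i]; exact div_neg_of_neg_of_pos (hneg i) (mul_self_pos.mpr (hc i))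
      rw [abs_of_neg h1]; ring
  have hσof' : ∀ i, |lam i / c i| = σ * (lam i / c i) := fun i => by
    linear_combination (-σ) * hσof i - |lam i / c i| * hσsq
  -- weighted sums of the a-part vanish
  have sumw : ∀ u : Fin n → ℝ, ∑ i, lam i * (∑ j, a i j * u j) = 0 := by
    intro u
    have h1 : ∀ i : Fin (n + 2), lam i * (∑ j, a i j * u j) = ∑ j, lam i * a i j * u j := by
      intro i
      rw [Finset.mul_sum]
      exact Finset.sum_congr rfl fun j _ => by ring
    calc ∑ i, lam i * (∑ j, a i j * u j)
        = ∑ i, ∑ j, lam i * a i j * u j := Finset.sum_congr rfl fun i _ => h1 i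
      _ = ∑ j, ∑ i, lam i * a i j * u j := Finset.sum_comm
      _ = ∑ j, (∑ i, lam i * a i j) * u j :=
          Finset.sum_congr rfl fun j _ => (Finset.sum_mul _ _ _).symm
      _ = 0 := by simp [hrelr]
  -- the fundamental log-equation for any positive singular point
  have logeq : ∀ t : ℝ, 0 < t → ∀ x : Fin n → ℝ, (∀ j, 0 < x j) →
      (∑ i, c i * t ^ h i * ∏ j, x j ^ a i j) = 0 →
      (∀ r, (∑ i, a i r * (c i * t ^ h i * ∏ j, x j ^ a i j)) = 0) →
      ∃ G : ℝ, ∀ i, h i * Real.log t + ∑ j, a i j * Real.log (x j)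
        = G + Real.log |lam i / c i| := by
    intro t ht x hx e1 e2
    obtain ⟨s, hs⟩ := CircuitAux.ker_is_span a hspan lam hrel0 hrelr hlam0
      (fun i => c i * t ^ h i * ∏ j, x j ^ a i j) e1
      (fun r => by
        rw [← e2 r]
        exact Finset.sum_congr rfl fun i _ => mul_comm _ _)
    have hpos : ∀ i : Fin (n + 2), 0 < t ^ h i * ∏ j, x j ^ a i j := fun i =>
      mul_pos (Real.rpow_pos_of_pos ht _)
        (Finset.prod_pos fun j _ => Real.rpow_pos_of_pos (hx j) _)
    have hyi : ∀ i, t ^ h i * ∏ j, x j ^ a i j = s * (lam i / c i) := by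
      intro i
      apply mul_left_cancel₀ (hc i)
      have h1 : c i * (t ^ h i * ∏ j, x j ^ a i j) = s * lam i := by
        have h2 := congrFun hs i
        simp only [Pi.smul_apply, smul_eq_mul] at h2
        rw [← h2]; ring
      rw [h1]
      field_simp
      try exact (mul_div_cancel_left₀ _ (hc i)).symm
      try ring
      exact (mul_inv_cancel_right₀ (hc i) _).symm
    have hsσ : 0 < s * σ := by
      have h0 := hpos 0
      rw [hyi 0, hσof 0] at h0
      nlinarith [habs 0]
    refine ⟨Real.log (s * σ), fun i => ?_⟩
    have h2 : t ^ h i * ∏ j, x j ^ a i j = (s * σ) * |lam i / c i| := by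
      rw [hyi i]; linear_combination s * hσof i
    have h3 := congrArg Real.log h2
    rw [Real.log_mul (Real.rpow_pos_of_pos ht _).ne'
        (Finset.prod_pos fun j _ => Real.rpow_pos_of_pos (hx j) _).ne',
      Real.log_rpow ht,
      Real.log_prod (fun j _ => (Real.rpow_pos_of_pos (hx j) _).ne'),
      Real.log_mul hsσ.ne' (habs i).ne'] at h3
    have h4 : ∑ j, a i j * Real.log (x j) = ∑ j, Real.log (x j ^ a i j) :=
      Finset.sum_congr rfl fun j _ => (Real.log_rpow (hx j) _).symm
    rw [h4]
    exact h3
  -- forward direction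
  have forward : ∀ t : ℝ, 0 < t →
      (∃ x : Fin n → ℝ, (∀ j, 0 < x j) ∧
        (∑ i, c i * t ^ h i * ∏ j, x j ^ a i j) = 0 ∧
        ∀ r : Fin n, (∑ i, a i r * (c i * t ^ h i * ∏ j, x j ^ a i j)) = 0) → t = tA := by
    rintro t ht ⟨x, hx, e1, e2⟩
    obtain ⟨G, hG⟩ := logeq t ht x hx e1 e2
    have hsum : ∑ i, lam i * (h i * Real.log t + ∑ j, a i j * Real.log (x j))
        = ∑ i, lam i * (G + Real.log |lam i / c i|) :=
      Finset.sum_congr rfl fun i _ => by rw [hG i]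
    have hL : ∑ i, lam i * (h i * Real.log t + ∑ j, a i j * Real.log (x j))
        = K * Real.log t := by
      simp only [mul_add]
      rw [Finset.sum_add_distrib, sumw, add_zero, hK, Finset.sum_mul]
      exact Finset.sum_congr rfl fun i _ => by ring
    have hR : ∑ i, lam i * (G + Real.log |lam i / c i|) = Real.log P := by
      simp only [mul_add]
      rw [Finset.sum_add_distrib, ← Finset.sum_mul, hrel0, zero_mul, zero_add, hlogP]
    have hlt : Real.log t = Real.log tA := by
      apply mul_left_cancel₀ hh
      rw [hKlog, ← hL, hsum, hR]
    exact Real.log_injOn_pos (Set.mem_Ioi.mpr ht) (Set.mem_Ioi.mpr htApos) hlt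
  -- construction of the singular point at t = tA
  have hDv : ∑ i, (Real.log |lam i / c i| - h i * Real.log tA) * lam i = 0 := by
    simp only [sub_mul]
    rw [Finset.sum_sub_distrib]
    have e1 : ∑ i, Real.log |lam i / c i| * lam i = Real.log P := by
      rw [hlogP]
      exact Finset.sum_congr rfl fun i _ => mul_comm _ _
    have e2 : ∑ i, h i * Real.log tA * lam i = K * Real.log tA := by
      rw [hK, Finset.sum_mul]
      exact Finset.sum_congr rfl fun i _ => by ring
    rw [e1, e2, hKlog, sub_self]
  obtain ⟨u0, u, hu⟩ := CircuitAux.solve_v a hspan lam hrel0 hrelr (hlam 0)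
    (fun i => Real.log |lam i / c i| - h i * Real.log tA) hDv
  set x0 : Fin n → ℝ := fun j => Real.exp (u j) with hx0
  have hx0pos : ∀ j, 0 < x0 j := fun j => Real.exp_pos _
  have hy0 : ∀ i, c i * tA ^ h i * ∏ j, x0 j ^ a i j = (σ * Real.exp (-u0)) * lam i := by
    intro i
    have p1 : tA ^ h i = Real.exp (Real.log tA * h i) := Real.rpow_def_of_pos htApos _
    have p3 : ∏ j, x0 j ^ a i j = Real.exp (∑ j, u j * a i j) := by
      rw [Real.exp_sum]
      refine Finset.prod_congr rfl fun j _ => ?_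
      rw [hx0, Real.rpow_def_of_pos (Real.exp_pos _), Real.log_exp]
    have p4 : Real.log tA * h i + ∑ j, u j * a i j = Real.log |lam i / c i| - u0 := by
      have h5 := hu i
      have e : ∑ j, u j * a i j = ∑ j, a i j * u j :=
        Finset.sum_congr rfl fun j _ => mul_comm _ _
      rw [mul_comm (Real.log tA) (h i), e]
      linarith
    calc c i * tA ^ h i * ∏ j, x0 j ^ a i j
        = c i * (Real.exp (Real.log tA * h i) * Real.exp (∑ j, u j * a i j)) := by
          rw [p1, p3]; ring
      _ = c i * Real.exp (Real.log |lam i / c i| - u0) := by rw [← Real.exp_add, p4]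
      _ = c i * (|lam i / c i| * Real.exp (-u0)) := by
          rw [sub_eq_add_neg, Real.exp_add, Real.exp_log (habs i)]
      _ = c i * (σ * (lam i / c i) * Real.exp (-u0)) := by rw [hσof' i]
      _ = σ * Real.exp (-u0) * (c i * (lam i / c i)) := by ring
      _ = (σ * Real.exp (-u0)) * lam i := by
          have hcl : c i * (lam i / c i) = lam i := by
            field_simp
            try exact mul_div_cancel_left₀ _ (hc i)
          rw [hcl]
  have e1x0 : ∑ i, c i * tA ^ h i * ∏ j, x0 j ^ a i j = 0 := by
    calc ∑ i, c i * tA ^ h i * ∏ j, x0 j ^ a i j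
        = ∑ i, (σ * Real.exp (-u0)) * lam i := Finset.sum_congr rfl fun i _ => hy0 i
      _ = (σ * Real.exp (-u0)) * ∑ i, lam i := by rw [Finset.mul_sum]
      _ = 0 := by rw [hrel0, mul_zero]
  have e2x0 : ∀ r, ∑ i, a i r * (c i * tA ^ h i * ∏ j, x0 j ^ a i j) = 0 := by
    intro r
    calc ∑ i, a i r * (c i * tA ^ h i * ∏ j, x0 j ^ a i j)
        = ∑ i, (σ * Real.exp (-u0)) * (lam i * a i r) :=
          Finset.sum_congr rfl fun i _ => by rw [hy0 i]; ring
      _ = (σ * Real.exp (-u0)) * ∑ i, lam i * a i r := by rw [Finset.mul_sum]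
      _ = 0 := by rw [hrelr r, mul_zero]
  -- uniqueness at t = tA
  have uniq : ∀ x : Fin n → ℝ, (∀ j, 0 < x j) →
      (∑ i, c i * tA ^ h i * ∏ j, x j ^ a i j) = 0 →
      (∀ r, ∑ i, a i r * (c i * tA ^ h i * ∏ j, x j ^ a i j) = 0) → x = x0 := by
    intro x hx e1 e2
    obtain ⟨G, hG⟩ := logeq tA htApos x hx e1 e2
    obtain ⟨G', hG'⟩ := logeq tA htApos x0 hx0pos e1x0 e2x0
    have hB : ∀ i, (G' - G) + ∑ j, a i j * (Real.log (x j) - Real.log (x0 j)) = 0 := by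
      intro i
      have d1 := hG i
      have d2 := hG' i
      have e : ∑ j, a i j * (Real.log (x j) - Real.log (x0 j))
          = (∑ j, a i j * Real.log (x j)) - ∑ j, a i j * Real.log (x0 j) := by
        simp [mul_sub, Finset.sum_sub_distrib]
      rw [e]
      linarith
    obtain ⟨-, h2⟩ := CircuitAux.B_inj a hspan (G' - G)
      (fun j => Real.log (x j) - Real.log (x0 j)) hB
    funext j
    have h3 : Real.log (x j) - Real.log (x0 j) = 0 := congrFun h2 j
    have h4 : Real.log (x j) = Real.log (x0 j) := by linarith
    calc x j = Real.exp (Real.log (x j)) := (Real.exp_log (hx j)).symm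
      _ = Real.exp (Real.log (x0 j)) := by rw [h4]
      _ = x0 j := Real.exp_log (hx0pos j)
  refine ⟨fun t ht => ⟨fun hex => forward t ht hex, fun hteq => ?_⟩, ?_⟩
  · rw [hteq]
    exact ⟨x0, hx0pos, e1x0, e2x0⟩
  · refine ⟨x0, ⟨hx0pos, e1x0, e2x0⟩, ?_⟩
    rintro x' ⟨hp, q1, q2⟩
    exact uniq x' hp q1 q2
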